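/- Let p ≡ 1 (mod 3) be a prime and let c, d be positive integers with 4p = c² + 3d². Then the three positive integers c, (c+3d)/2 or |c−3d|/2, together with d, |c−d|/2, (c+d)/2, give exactly the solutions: the set of pairs (s,t) of positive integers with s² − 4p = −3t² is {(c,d), ((c+3d)/2, |c−d|/2), (|c−3d|/2, (c+d)/2)}. -/
import Mathlib


set_option maxHeartbeats 1000000 in
/-- Let `p ≡ 1 (mod 3)` be prime and `c, d` positive integers with `4p = c² + 3d²`. Then the
positive integer solutions `(s,t)` of `s² − 4p = −3t²` are exactly `(c,d)`,
`((c+3d)/2, |c−d|/2)` and `(|c−3d|/2, (c+d)/2)`. -/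
theorem solutions_neg_three (p : ℕ) (hp : p.Prime) (h3 : p % 3 = 1)
    (c d : ℤ) (hc : 0 < c) (hd : 0 < d) (hcd : 4 * (p : ℤ) = c ^ 2 + 3 * d ^ 2) :
    ∀ s t : ℤ, (0 < s ∧ 0 < t ∧ s ^ 2 - 4 * (p : ℤ) = -3 * t ^ 2) ↔
      ((s = c ∧ t = d) ∨ (2 * s = c + 3 * d ∧ 2 * t = |c - d|) ∨
        (2 * s = |c - 3 * d| ∧ 2 * t = c + d)) := by
  have hp0 : (0:ℤ) < p := by exact_mod_cast hp.pos
  have hpI : Prime (p:ℤ) := Nat.prime_iff_prime_int.mp hp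
  have hne1 : c ≠ d := by
    rintro rfl
    have hn : ((c.toNat : ℤ)) = c := Int.toNat_of_nonneg hc.le
    have hpn : p = c.toNat * c.toNat := by
      have : (p:ℤ) = (c.toNat : ℤ) * ((c.toNat : ℤ)) := by rw [hn]; nlinarith
      exact_mod_cast this
    rcases hp.eq_one_or_self_of_dvd c.toNat ⟨c.toNat, hpn⟩ with h | h
    · rw [h] at hpn; have := hp.two_le; omega
    · have := hp.two_le; nlinarith
  have hne3 : c ≠ 3 * d := by
    rintro rfl
    have h3d : (3:ℤ) ∣ (p:ℤ) := ⟨d ^ 2, by nlinarith⟩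
    have h3d' : (3:ℕ) ∣ p := by exact_mod_cast h3d
    have : p = 3 := ((Nat.prime_dvd_prime_iff_eq Nat.prime_three hp).mp h3d').symm
    omega
  intro s t
  constructor
  · rintro ⟨hs, ht, heq⟩
    have heq' : s ^ 2 + 3 * t ^ 2 = 4 * (p:ℤ) := by linarith
    have key : (p:ℤ) ∣ (s * d - t * c) * (s * d + t * c) :=
      ⟨4 * (d ^ 2 - t ^ 2), by linear_combination d ^ 2 * heq' + t ^ 2 * hcd⟩
    rcases hpI.dvd_mul.mp key with h1 | h1
    · obtain ⟨k, hk⟩ := h1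
      have hid : (s * c + 3 * t * d) ^ 2 = (p:ℤ) ^ 2 * (16 - 3 * k ^ 2) := by
        linear_combination (c ^ 2 + 3 * d ^ 2) * heq' - 4 * (p:ℤ) * hcd -
          3 * (s * d - t * c + (p:ℤ) * k) * hk
      have hdvd2 : (p:ℤ) ∣ s * c + 3 * t * d :=
        hpI.dvd_of_dvd_pow (n := 2) ⟨(p:ℤ) * (16 - 3 * k ^ 2), by linear_combination hid⟩
      obtain ⟨m, hm⟩ := hdvd2
      have h16 : m ^ 2 + 3 * k ^ 2 = 16 := by
        have h2 : (p:ℤ) ^ 2 * (m ^ 2 + 3 * k ^ 2) = (p:ℤ) ^ 2 * 16 := by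
          linear_combination hid - (s * c + 3 * t * d + (p:ℤ) * m) * hm
        exact mul_left_cancel₀ (pow_ne_zero _ hp0.ne') h2
      have hmpos : 0 < m := by nlinarith [mul_pos hs hc, mul_pos ht hd]
      have hkl : -2 ≤ k := by nlinarith
      have hku : k ≤ 2 := by nlinarith
      have hmu : m ≤ 4 := by nlinarith
      have hcase : (k = 0 ∧ m = 4) ∨ (k = 2 ∧ m = 2) ∨ (k = -2 ∧ m = 2) := by
        have h16' : m * m + 3 * (k * k) = 16 := by linear_combination h16
        interval_cases k <;> interval_cases m <;> omega
      rcases hcase with ⟨rfl, rfl⟩ | ⟨rfl, rfl⟩ | ⟨rfl, rfl⟩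
      · -- sd = tc : first disjunct
        left
        have hdt : (d - t) * ((d + t) * (4 * (p:ℤ))) = 0 := by
          linear_combination -(d ^ 2 * heq') - t ^ 2 * hcd + (s * d + t * c) * hk
        have htd : t = d := by
          rcases mul_eq_zero.mp hdt with h | h
          · linarith
          · nlinarith
        subst htd
        have hsc : (s - c) * t = 0 := by linear_combination hk
        rcases mul_eq_zero.mp hsc with h | h
        · exact ⟨by linarith, rfl⟩
        · exact absurd h ht.ne'
      · -- k = 2, m = 2 : second disjunct (d > c)
        right; left
        have hs2 : (2 * s - (c + 3 * d)) * (2 * (p:ℤ)) = 0 := by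
          linear_combination s * hcd + c * hm + 3 * d * hk
        have ht2 : (2 * t - (d - c)) * (2 * (p:ℤ)) = 0 := by
          linear_combination t * hcd + d * hm - c * hk
        have hs3 : 2 * s = c + 3 * d := by
          rcases mul_eq_zero.mp hs2 with h | h
          · linarith
          · linarith
        have ht3 : 2 * t = d - c := by
          rcases mul_eq_zero.mp ht2 with h | h
          · linarith
          · linarith
        refine ⟨hs3, ?_⟩
        rw [abs_of_neg (by linarith : c - d < 0)]; linarith
      · -- k = -2, m = 2 : third disjunct
        right; right
        have hs2 : (2 * s - (c - 3 * d)) * (2 * (p:ℤ)) = 0 := by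
          linear_combination s * hcd + c * hm + 3 * d * hk
        have ht2 : (2 * t - (c + d)) * (2 * (p:ℤ)) = 0 := by
          linear_combination t * hcd + d * hm - c * hk
        have hs3 : 2 * s = c - 3 * d := by
          rcases mul_eq_zero.mp hs2 with h | h
          · linarith
          · linarith
        have ht3 : 2 * t = c + d := by
          rcases mul_eq_zero.mp ht2 with h | h
          · linarith
          · linarith
        refine ⟨?_, ht3⟩
        rw [abs_of_pos (by linarith : (0:ℤ) < c - 3 * d)]; linarith
    · obtain ⟨k, hk⟩ := h1
      have hid : (s * c - 3 * t * d) ^ 2 = (p:ℤ) ^ 2 * (16 - 3 * k ^ 2) := by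
        linear_combination (c ^ 2 + 3 * d ^ 2) * heq' - 4 * (p:ℤ) * hcd -
          3 * (s * d + t * c + (p:ℤ) * k) * hk
      have hdvd2 : (p:ℤ) ∣ s * c - 3 * t * d :=
        hpI.dvd_of_dvd_pow (n := 2) ⟨(p:ℤ) * (16 - 3 * k ^ 2), by linear_combination hid⟩
      obtain ⟨m, hm⟩ := hdvd2
      have h16 : m ^ 2 + 3 * k ^ 2 = 16 := by
        have h2 : (p:ℤ) ^ 2 * (m ^ 2 + 3 * k ^ 2) = (p:ℤ) ^ 2 * 16 := by
          linear_combination hid - (s * c - 3 * t * d + (p:ℤ) * m) * hm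
        exact mul_left_cancel₀ (pow_ne_zero _ hp0.ne') h2
      have hkpos : 0 < k := by nlinarith [mul_pos hs hd, mul_pos ht hc]
      have hku : k ≤ 2 := by nlinarith
      have hml : -4 ≤ m := by nlinarith [sq_nonneg (m + 4), sq_nonneg k]
      have hmu : m ≤ 4 := by nlinarith [sq_nonneg (m - 4), sq_nonneg k]
      have hcase : (k = 2 ∧ m = 2) ∨ (k = 2 ∧ m = -2) := by
        have h16' : m * m + 3 * (k * k) = 16 := by linear_combination h16
        interval_cases k <;> interval_cases m <;> omega
      rcases hcase with ⟨rfl, rfl⟩ | ⟨rfl, rfl⟩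
      · -- second disjunct (c > d)
        right; left
        have hs2 : (2 * s - (c + 3 * d)) * (2 * (p:ℤ)) = 0 := by
          linear_combination s * hcd + c * hm + 3 * d * hk
        have ht2 : (2 * t - (c - d)) * (2 * (p:ℤ)) = 0 := by
          linear_combination t * hcd - d * hm + c * hk
        have hs3 : 2 * s = c + 3 * d := by
          rcases mul_eq_zero.mp hs2 with h | h
          · linarith
          · linarith
        have ht3 : 2 * t = c - d := by
          rcases mul_eq_zero.mp ht2 with h | h
          · linarith
          · linarith
        refine ⟨hs3, ?_⟩
        rw [abs_of_pos (by linarith : (0:ℤ) < c - d)]; linarith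
      · -- third disjunct
        right; right
        have hs2 : (2 * s - (3 * d - c)) * (2 * (p:ℤ)) = 0 := by
          linear_combination s * hcd + c * hm + 3 * d * hk
        have ht2 : (2 * t - (c + d)) * (2 * (p:ℤ)) = 0 := by
          linear_combination t * hcd - d * hm + c * hk
        have hs3 : 2 * s = 3 * d - c := by
          rcases mul_eq_zero.mp hs2 with h | h
          · linarith
          · linarith
        have ht3 : 2 * t = c + d := by
          rcases mul_eq_zero.mp ht2 with h | h
          · linarith
          · linarith
        refine ⟨?_, ht3⟩
        rw [abs_of_neg (by linarith : c - 3 * d < 0)]; linarith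
  · rintro (⟨rfl, rfl⟩ | ⟨h1, h2⟩ | ⟨h1, h2⟩)
    · exact ⟨hc, hd, by linarith⟩
    · have h2' : (2 * t) ^ 2 = (c - d) ^ 2 := by rw [h2, sq_abs]
      have htpos : 0 < t := by
        have : 0 < |c - d| := abs_pos.mpr (sub_ne_zero.mpr hne1)
        linarith
      have hspos : 0 < s := by linarith
      refine ⟨hspos, htpos, ?_⟩
      have h4 : 4 * (s ^ 2 - 4 * (p:ℤ) + 3 * t ^ 2) = 0 := by
        linear_combination (2 * s + c + 3 * d) * h1 + 3 * h2' - 4 * hcd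
      linarith
    · have h1' : (2 * s) ^ 2 = (c - 3 * d) ^ 2 := by rw [h1, sq_abs]
      have hspos : 0 < s := by
        have : 0 < |c - 3 * d| := abs_pos.mpr (sub_ne_zero.mpr hne3)
        linarith
      have htpos : 0 < t := by linarith
      refine ⟨hspos, htpos, ?_⟩
      have h4 : 4 * (s ^ 2 - 4 * (p:ℤ) + 3 * t ^ 2) = 0 := by
        linear_combination h1' + 3 * (2 * t + c + d) * h2 - 4 * hcd
      linarith
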